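/- arXiv:2307.11505 — 5 statements merged into one kernel-verified Lean document; each statement's English description precedes it below -/
import Mathlib

section
/- For symmetric positive definite P ∈ ℝ^{n×n}, γ > 0, ε₁ > 0, and matrices Ā ∈ ℝ^{n×n}, D ∈ ℝ^{n×m}, the block matrix [[P⁻¹, 0, I, Āᵀ, 0], [0, γI, 0, 0, Dᵀ], [I, 0, γI, 0, 0], [Ā, 0, 0, (ε₁/(1+ε₁))P, 0], [0, D, 0, 0, (1/ε₁)P]] is positive definite if and only if both (1+ε₁⁻¹)ĀᵀP⁻¹Ā − P⁻¹ + γ⁻¹I ≺ 0 and ε₁DᵀP⁻¹D − γI ≺ 0. -/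
open Matrix

section Aux

variable {k l : Type*} [Fintype k] [Fintype l] [DecidableEq k] [DecidableEq l]

set_option linter.unusedSectionVars false

lemma my_smul_posDef {c : ℝ} (hc : 0 < c) {P : Matrix k k ℝ} (hP : P.PosDef) :
    (c • P).PosDef := by
  refine posDef_iff_dotProduct_mulVec.mpr ⟨?_, fun x hx => ?_⟩
  · unfold Matrix.IsHermitian
    rw [conjTranspose_smul, hP.1.eq]
    simp
  · rw [smul_mulVec, dotProduct_smul, smul_eq_mul]
    exact mul_pos hc (hP.dotProduct_mulVec_pos hx)

lemma my_posDef_fromBlocks_diag {A : Matrix k k ℝ} {D : Matrix l l ℝ} :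
    (fromBlocks A 0 0 D).PosDef ↔ A.PosDef ∧ D.PosDef := by
  have hsum : ∀ (x : k → ℝ) (y : l → ℝ),
      star (Sum.elim x y) ⬝ᵥ (fromBlocks A 0 0 D *ᵥ Sum.elim x y)
        = star x ⬝ᵥ (A *ᵥ x) + star y ⬝ᵥ (D *ᵥ y) := by
    intro x y
    rw [fromBlocks_mulVec]
    simp [Function.star_sumElim, sumElim_dotProduct_sumElim]
  constructor
  · intro h; obtain ⟨h1, h2⟩ := posDef_iff_dotProduct_mulVec.mp h
    rw [isHermitian_fromBlocks_iff] at h1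
    refine ⟨posDef_iff_dotProduct_mulVec.mpr ⟨h1.1, fun x hx => ?_⟩,
      posDef_iff_dotProduct_mulVec.mpr ⟨h1.2.2.2, fun y hy => ?_⟩⟩
    · have := h2 (x := Sum.elim x 0) (fun h => hx (funext fun i => congrFun h (Sum.inl i)))
      rw [hsum] at this
      simpa using this
    · have := h2 (x := Sum.elim 0 y) (fun h => hy (funext fun i => congrFun h (Sum.inr i)))
      rw [hsum] at this
      simpa using this
  · rintro ⟨hA, hD⟩
    refine posDef_iff_dotProduct_mulVec.mpr ⟨isHermitian_fromBlocks_iff.mpr ⟨hA.1, by simp, by simp, hD.1⟩, fun v hv => ?_⟩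
    rw [← Sum.elim_comp_inl_inr v, hsum]
    by_cases hx : v ∘ Sum.inl = 0
    · have hy : v ∘ Sum.inr ≠ 0 := by
        intro hy
        exact hv (by rw [← Sum.elim_comp_inl_inr v, hx, hy]; ext (i|i) <;> simp)
      rw [hx]
      simpa using hD.dotProduct_mulVec_pos hy
    · exact add_pos_of_pos_of_nonneg (hA.dotProduct_mulVec_pos hx)
        ((posSemidef_iff_dotProduct_mulVec.mp hD.posSemidef).2 _)

lemma my_posDef_fromBlocks₂₂ {A : Matrix k k ℝ} (B : Matrix k l ℝ) {D : Matrix l l ℝ}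
    (hD : D.PosDef) [Invertible D] :
    (fromBlocks A B Bᴴ D).PosDef ↔ (A - B * D⁻¹ * Bᴴ).PosDef := by
  rw [posDef_iff_dotProduct_mulVec, posDef_iff_dotProduct_mulVec, IsHermitian.fromBlocks₂₂ _ _ hD.1]
  constructor
  · rintro ⟨h1, h2⟩
    refine ⟨h1, fun x hx => ?_⟩
    have := h2 (x := Sum.elim x (-((D⁻¹ * Bᴴ) *ᵥ x)))
      (fun h => hx (funext fun i => congrFun h (Sum.inl i)))
    rw [dotProduct_mulVec] at this
    rw [show Sum.elim x (-((D⁻¹ * Bᴴ) *ᵥ x)) = x ⊕ᵥ (-((D⁻¹ * Bᴴ) *ᵥ x)) from rfl,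
      schur_complement_eq₂₂ A B _ _ hD.1] at this
    simp only [add_neg_cancel] at this
    rw [dotProduct_mulVec]
    simpa using this
  · rintro ⟨h1, h2⟩
    refine ⟨h1, fun v hv => ?_⟩
    rw [dotProduct_mulVec, ← Sum.elim_comp_inl_inr v,
      schur_complement_eq₂₂ A B _ _ hD.1]
    by_cases hx : v ∘ Sum.inl = 0
    · have hy : v ∘ Sum.inr ≠ 0 := by
        intro hy
        exact hv (by rw [← Sum.elim_comp_inl_inr v, hx, hy]; ext (i|i) <;> simp)
      rw [hx]
      have := hD.dotProduct_mulVec_pos hy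
      rw [dotProduct_mulVec] at this
      simpa using this
    · have h2' := h2 hx
      rw [dotProduct_mulVec] at h2'
      refine add_pos_of_nonneg_of_pos ?_ h2'
      have := (posSemidef_iff_dotProduct_mulVec.mp hD.posSemidef).2 ((D⁻¹ * Bᴴ) *ᵥ (v ∘ Sum.inl) + v ∘ Sum.inr)
      rw [dotProduct_mulVec] at this
      exact this

end Aux

/-- Schur complement characterisation: the 5×5 block matrix
`[[P⁻¹,0,I,Āᵀ,0],[0,γI,0,0,Dᵀ],[I,0,γI,0,0],[Ā,0,0,(ε₁/(1+ε₁))P,0],[0,D,0,0,(1/ε₁)P]]`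
is positive definite iff `(1+ε₁⁻¹)ĀᵀP⁻¹Ā − P⁻¹ + γ⁻¹I ≺ 0` and `ε₁DᵀP⁻¹D − γI ≺ 0`. -/
theorem stmt_5 {n m : ℕ}
    (P : Matrix (Fin n) (Fin n) ℝ) (hP : P.PosDef)
    (γ ε₁ : ℝ) (hγ : 0 < γ) (hε₁ : 0 < ε₁)
    (Abar : Matrix (Fin n) (Fin n) ℝ) (D : Matrix (Fin n) (Fin m) ℝ) :
    (fromBlocks
      (fromBlocks P⁻¹ 0 0 (γ • (1 : Matrix (Fin m) (Fin m) ℝ)))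
      (fromRows
        (fromCols (1 : Matrix (Fin n) (Fin n) ℝ) (fromCols Abarᵀ 0))
        (fromCols 0 (fromCols (0 : Matrix (Fin m) (Fin n) ℝ) Dᵀ)))
      (fromRows
        (fromCols (1 : Matrix (Fin n) (Fin n) ℝ) (fromCols Abarᵀ 0))
        (fromCols 0 (fromCols (0 : Matrix (Fin m) (Fin n) ℝ) Dᵀ)))ᵀ
      (fromBlocks (γ • (1 : Matrix (Fin n) (Fin n) ℝ)) 0 0
        (fromBlocks ((ε₁ / (1 + ε₁)) • P) 0 0 ((1 / ε₁) • P)))).PosDef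
    ↔ ((-((1 + ε₁⁻¹) • (Abarᵀ * P⁻¹ * Abar) - P⁻¹
          + γ⁻¹ • (1 : Matrix (Fin n) (Fin n) ℝ))).PosDef
        ∧ (-(ε₁ • (Dᵀ * P⁻¹ * D) - γ • (1 : Matrix (Fin m) (Fin m) ℝ))).PosDef) := by
  have h1ε : 0 < 1 + ε₁ := by linarith
  set B := fromRows
      (fromCols (1 : Matrix (Fin n) (Fin n) ℝ) (fromCols Abarᵀ 0))
      (fromCols 0 (fromCols (0 : Matrix (Fin m) (Fin n) ℝ) Dᵀ)) with hB
  set Db := fromBlocks (γ • (1 : Matrix (Fin n) (Fin n) ℝ)) 0 0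
      (fromBlocks ((ε₁ / (1 + ε₁)) • P) 0 0 ((1 / ε₁) • P)) with hDbdef
  have hDb : Db.PosDef := by
    rw [hDbdef]
    exact my_posDef_fromBlocks_diag.mpr ⟨my_smul_posDef hγ Matrix.PosDef.one,
      my_posDef_fromBlocks_diag.mpr ⟨my_smul_posDef (div_pos hε₁ h1ε) hP,
        my_smul_posDef (by positivity) hP⟩⟩
  haveI : Invertible Db := Db.invertibleOfIsUnitDet hDb.det_pos.ne'.isUnit
  have hBt : Bᵀ = Bᴴ := (conjTranspose_eq_transpose_of_trivial _).symm
  rw [hBt, my_posDef_fromBlocks₂₂ B hDb, ← hBt]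
  have hPP : P * P⁻¹ = 1 := mul_nonsing_inv P hP.det_pos.ne'.isUnit
  have hinv : Db⁻¹ = fromBlocks (γ⁻¹ • (1 : Matrix (Fin n) (Fin n) ℝ)) 0 0
      (fromBlocks (((1 + ε₁) / ε₁) • P⁻¹) 0 0 (ε₁ • P⁻¹)) := by
    apply inv_eq_right_inv
    rw [hDbdef]
    have e1 : γ * γ⁻¹ = 1 := mul_inv_cancel₀ hγ.ne'
    have e2 : ε₁ / (1 + ε₁) * ((1 + ε₁) / ε₁) = 1 := by
      field_simp
    have e3 : 1 / ε₁ * ε₁ = 1 := by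
      field_simp
    have e1' : γ⁻¹ * γ = 1 := inv_mul_cancel₀ hγ.ne'
    have e2' : (1 + ε₁) / ε₁ * (ε₁ / (1 + ε₁)) = 1 := by field_simp
    have e3' : ε₁ * ε₁⁻¹ = 1 := mul_inv_cancel₀ hε₁.ne'
    simp [fromBlocks_multiply, smul_mul_assoc, mul_smul_comm, smul_smul, e1, e2, e3, e1', e2',
      e3', hPP, fromBlocks_one]
  have key : fromBlocks P⁻¹ 0 0 (γ • (1 : Matrix (Fin m) (Fin m) ℝ)) - B * Db⁻¹ * Bᵀ
      = fromBlocks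
        (-((1 + ε₁⁻¹) • (Abarᵀ * P⁻¹ * Abar) - P⁻¹ + γ⁻¹ • (1 : Matrix (Fin n) (Fin n) ℝ))) 0 0
        (-(ε₁ • (Dᵀ * P⁻¹ * D) - γ • (1 : Matrix (Fin m) (Fin m) ℝ))) := by
    rw [hinv, hB]
    have e4 : (1 + ε₁) / ε₁ = 1 + ε₁⁻¹ := by field_simp; ring
    simp only [transpose_fromRows, transpose_fromCols, transpose_one, transpose_zero,
      transpose_transpose, fromRows_mul, fromCols_mul_fromBlocks, fromRows_mul_fromCols,
      fromCols_mul_fromRows, Matrix.mul_zero, Matrix.zero_mul, Matrix.mul_one, Matrix.one_mul,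
      add_zero, zero_add, smul_mul_assoc, mul_smul_comm, Matrix.mul_assoc, e4,
      mul_fromCols, smul_zero, fromRows_fromCols_eq_fromBlocks, fromBlocks_transpose,
      fromBlocks_multiply]
    rw [sub_eq_add_neg, fromBlocks_neg, fromBlocks_add, fromBlocks_inj]
    refine ⟨by abel, by simp, by simp, ?_⟩
    ext i j
    simp [Matrix.mul_apply, Matrix.smul_apply, Matrix.one_apply, Finset.mul_sum,
      Finset.sum_mul, mul_assoc, mul_comm, mul_left_comm]
    ring_nf
  rw [key, my_posDef_fromBlocks_diag]
end

section
/- Let Ω be a symmetric matrix, M ∈ ℝ^{p × T}, N ∈ ℝ^{n_w × T} (embedded as blocks of appropriate size), Δ ∈ ℝ^{n_w × n_w}, and ε₂ > 0. If Ω − ε₂⁻¹·M·Mᵀ − ε₂·Nᵀ·Δ·Δᵀ·N ≻ 0, then for every W ∈ ℝ^{n_w × T} with W·Wᵀ ⪯ Δ·Δᵀ, the matrix Ω − M·Wᵀ·N − Nᵀ·W·Mᵀ is positive definite. -/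
open Matrix

/-- If `Ω − ε₂⁻¹ M Mᵀ − ε₂ Nᵀ Δ Δᵀ N ≻ 0`, then for every `W` with `W Wᵀ ⪯ Δ Δᵀ`,
the matrix `Ω − M Wᵀ N − Nᵀ W Mᵀ` is positive definite. -/
theorem stmt_6 {p T nw : ℕ}
    (Ω : Matrix (Fin p) (Fin p) ℝ) (hΩ : Ω.IsSymm)
    (M : Matrix (Fin p) (Fin T) ℝ) (N : Matrix (Fin nw) (Fin p) ℝ)
    (Δ : Matrix (Fin nw) (Fin nw) ℝ) (ε₂ : ℝ) (hε₂ : 0 < ε₂)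
    (h : (Ω - ε₂⁻¹ • (M * Mᵀ) - ε₂ • (Nᵀ * Δ * Δᵀ * N)).PosDef) :
    ∀ W : Matrix (Fin nw) (Fin T) ℝ, (Δ * Δᵀ - W * Wᵀ).PosSemidef →
      (Ω - M * Wᵀ * N - Nᵀ * W * Mᵀ).PosDef := by
  intro W hW
  rw [Matrix.posDef_iff_dotProduct_mulVec]
  constructor
  · have hΩ' : Ωᵀ = Ω := hΩ
    show (Ω - M * Wᵀ * N - Nᵀ * W * Mᵀ)ᴴ = _
    rw [Matrix.conjTranspose_eq_transpose_of_trivial]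
    simp only [Matrix.transpose_sub, Matrix.transpose_mul, Matrix.transpose_transpose, hΩ',
      Matrix.mul_assoc]
    abel
  · intro x hx
    have hpos := h.dotProduct_mulVec_pos hx
    simp only [star_trivial] at hpos ⊢
    set a : Fin T → ℝ := Mᵀ *ᵥ x with ha
    set b : Fin nw → ℝ := N *ᵥ x with hb
    set c : Fin T → ℝ := Wᵀ *ᵥ b with hc
    have e1 : x ⬝ᵥ ((M * Wᵀ * N) *ᵥ x) = a ⬝ᵥ c := by
      simp only [← Matrix.mulVec_mulVec]
      rw [Matrix.dotProduct_mulVec, ← Matrix.mulVec_transpose]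
    have e2 : x ⬝ᵥ ((Nᵀ * W * Mᵀ) *ᵥ x) = c ⬝ᵥ a := by
      simp only [← Matrix.mulVec_mulVec]
      rw [Matrix.dotProduct_mulVec, Matrix.vecMul_transpose,
        Matrix.dotProduct_mulVec, ← Matrix.mulVec_transpose]
    have e3 : x ⬝ᵥ ((M * Mᵀ) *ᵥ x) = a ⬝ᵥ a := by
      simp only [← Matrix.mulVec_mulVec]
      rw [Matrix.dotProduct_mulVec, ← Matrix.mulVec_transpose]
    have e4 : x ⬝ᵥ ((Nᵀ * Δ * Δᵀ * N) *ᵥ x) = b ⬝ᵥ ((Δ * Δᵀ) *ᵥ b) := by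
      simp only [← Matrix.mulVec_mulVec]
      rw [Matrix.dotProduct_mulVec, Matrix.vecMul_transpose]
    have e5 : b ⬝ᵥ ((W * Wᵀ) *ᵥ b) = c ⬝ᵥ c := by
      simp only [← Matrix.mulVec_mulVec]
      rw [Matrix.dotProduct_mulVec, ← Matrix.mulVec_transpose]
    have hWb : c ⬝ᵥ c ≤ b ⬝ᵥ ((Δ * Δᵀ) *ᵥ b) := by
      have := hW.dotProduct_mulVec_nonneg b
      simp only [star_trivial, Matrix.sub_mulVec, dotProduct_sub,
        RCLike.re_to_real] at this
      rw [← e5]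
      linarith
    have key : 2 * (a ⬝ᵥ c) ≤ ε₂⁻¹ * (a ⬝ᵥ a) + ε₂ * (c ⬝ᵥ c) := by
      have hd : 0 ≤ (a - ε₂ • c) ⬝ᵥ (a - ε₂ • c) := by
        apply Finset.sum_nonneg
        intro i _
        simp only [Pi.sub_apply, Pi.smul_apply, smul_eq_mul]
        exact mul_self_nonneg _
      have hexp : (a - ε₂ • c) ⬝ᵥ (a - ε₂ • c)
          = a ⬝ᵥ a - 2 * ε₂ * (a ⬝ᵥ c) + ε₂ ^ 2 * (c ⬝ᵥ c) := by
        simp only [dotProduct_sub, sub_dotProduct, dotProduct_smul,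
          smul_dotProduct, smul_eq_mul]
        rw [dotProduct_comm c a]
        ring
      rw [hexp] at hd
      rw [← mul_le_mul_iff_right₀ hε₂]
      have hre : ε₂ * (ε₂⁻¹ * (a ⬝ᵥ a) + ε₂ * (c ⬝ᵥ c))
          = a ⬝ᵥ a + ε₂ ^ 2 * (c ⬝ᵥ c) := by
        field_simp
      rw [hre]
      nlinarith [hd]
    simp only [Matrix.sub_mulVec, dotProduct_sub, Matrix.smul_mulVec,
      dotProduct_smul, smul_eq_mul] at hpos ⊢
    rw [e1, e2]
    rw [e3, e4] at hpos
    rw [dotProduct_comm c a]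
    have hmul := mul_le_mul_of_nonneg_left hWb hε₂.le
    linarith
end

section
/- Suppose K = U₀·G with G = [G₁ G₂] satisfying Z₀·G = I_{n_z}, and the data satisfies X₁ = A·Z₀ + B·U₀ + D·W₀. Then for any x-state z = [x; q] ∈ ℝ^{n_z} (split into x ∈ ℝ^{n_x} and q ∈ ℝ^{n_z−n_x}), the closed-loop update A·z + B·K·z + D·w equals Ā·x + Ē·q + D·w, where Ā = (X₁ − D·W₀)·G₁ and Ē = (X₁ − D·W₀)·G₂. -/
open Matrix

/-- Data-based closed-loop representation: with `K = U₀ [G₁ G₂]`, `Z₀ [G₁ G₂] = I`,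
and `X₁ = A Z₀ + B U₀ + D W₀`, the closed-loop update `A z + B K z + D w` on
`z = [x; q]` equals `Ā x + Ē q + D w` with `Ā = (X₁ − D W₀) G₁`, `Ē = (X₁ − D W₀) G₂`. -/
theorem stmt_8 {nx k nu nw T : ℕ}
    (A : Matrix (Fin nx) (Fin nx ⊕ Fin k) ℝ) (B : Matrix (Fin nx) (Fin nu) ℝ)
    (D : Matrix (Fin nx) (Fin nw) ℝ)
    (U0 : Matrix (Fin nu) (Fin T) ℝ) (Z0 : Matrix (Fin nx ⊕ Fin k) (Fin T) ℝ)
    (X1 : Matrix (Fin nx) (Fin T) ℝ) (W0 : Matrix (Fin nw) (Fin T) ℝ)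
    (G₁ : Matrix (Fin T) (Fin nx) ℝ) (G₂ : Matrix (Fin T) (Fin k) ℝ)
    (K : Matrix (Fin nu) (Fin nx ⊕ Fin k) ℝ)
    (hK : K = U0 * fromCols G₁ G₂)
    (hI : Z0 * fromCols G₁ G₂ = 1)
    (hdata : X1 = A * Z0 + B * U0 + D * W0)
    (x : Fin nx → ℝ) (q : Fin k → ℝ) (w : Fin nw → ℝ) :
    A.mulVec (Sum.elim x q) + B.mulVec (K.mulVec (Sum.elim x q)) + D.mulVec w
      = ((X1 - D * W0) * G₁).mulVec x + ((X1 - D * W0) * G₂).mulVec q + D.mulVec w := by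
  have key : A + B * K = (X1 - D * W0) * fromCols G₁ G₂ := by
    rw [hK, hdata]
    rw [add_sub_cancel_right, Matrix.add_mul, Matrix.mul_assoc, Matrix.mul_assoc, hI,
      Matrix.mul_one]
  have h2 : A.mulVec (Sum.elim x q) + B.mulVec (K.mulVec (Sum.elim x q))
      = ((X1 - D * W0) * fromCols G₁ G₂).mulVec (Sum.elim x q) := by
    rw [← key, Matrix.add_mulVec, Matrix.mulVec_mulVec]
  rw [h2, ← Matrix.mulVec_mulVec, fromCols_mulVec_sumElim,
    Matrix.mulVec_add, Matrix.mulVec_mulVec, Matrix.mulVec_mulVec]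
end

section
/- If in addition to the hypotheses of the data-based closed-loop representation one has X₁·G₂ = 0, then the closed-loop update on z = [x; q] equals Ā·x − D·W₀·G₂·q + D·w, i.e., the nonlinear channel matrix reduces to Ē = −D·W₀·G₂. -/
open Matrix

/-- Under the data-based closed-loop representation hypotheses together with
`X₁ G₂ = 0`, the closed-loop update equals `Ā x − D W₀ G₂ q + D w`, i.e. the
nonlinear channel matrix reduces to `Ē = −D W₀ G₂`. -/
theorem stmt_9 {nx k nu nw T : ℕ}
    (A : Matrix (Fin nx) (Fin nx ⊕ Fin k) ℝ) (B : Matrix (Fin nx) (Fin nu) ℝ)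
    (D : Matrix (Fin nx) (Fin nw) ℝ)
    (U0 : Matrix (Fin nu) (Fin T) ℝ) (Z0 : Matrix (Fin nx ⊕ Fin k) (Fin T) ℝ)
    (X1 : Matrix (Fin nx) (Fin T) ℝ) (W0 : Matrix (Fin nw) (Fin T) ℝ)
    (G₁ : Matrix (Fin T) (Fin nx) ℝ) (G₂ : Matrix (Fin T) (Fin k) ℝ)
    (K : Matrix (Fin nu) (Fin nx ⊕ Fin k) ℝ)
    (hK : K = U0 * fromCols G₁ G₂)
    (hI : Z0 * fromCols G₁ G₂ = 1)
    (hdata : X1 = A * Z0 + B * U0 + D * W0)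
    (hG₂ : X1 * G₂ = 0)
    (x : Fin nx → ℝ) (q : Fin k → ℝ) (w : Fin nw → ℝ) :
    A.mulVec (Sum.elim x q) + B.mulVec (K.mulVec (Sum.elim x q)) + D.mulVec w
      = ((X1 - D * W0) * G₁).mulVec x - (D * W0 * G₂).mulVec q + D.mulVec w := by
  have hA : A + B * K = (X1 - D * W0) * fromCols G₁ G₂ := by
    rw [hK, hdata]
    rw [add_sub_cancel_right, Matrix.add_mul, Matrix.mul_assoc, Matrix.mul_assoc, hI,
      Matrix.mul_one]
  have h2 : (X1 - D * W0) * G₂ = -(D * W0 * G₂) := by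
    rw [Matrix.sub_mul, hG₂, zero_sub]
  calc A.mulVec (Sum.elim x q) + B.mulVec (K.mulVec (Sum.elim x q)) + D.mulVec w
      = (A + B * K).mulVec (Sum.elim x q) + D.mulVec w := by
        rw [Matrix.add_mulVec, Matrix.mulVec_mulVec]
    _ = ((X1 - D * W0) * G₁).mulVec x + ((X1 - D * W0) * G₂).mulVec q + D.mulVec w := by
        rw [hA, Matrix.mul_fromCols, Matrix.fromCols_mulVec_sumElim]
    _ = ((X1 - D * W0) * G₁).mulVec x - (D * W0 * G₂).mulVec q + D.mulVec w := by
        rw [h2, Matrix.neg_mulVec, ← sub_eq_add_neg]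
end

section
/- Let P ≻ 0, γ > 0, ε₁, ε₂ > 0, and suppose the 7×7 block LMI of the control-design theorem holds: the symmetric block matrix with diagonal blocks P, γI_{n_w}, γI_{n_x}, (ε₁/(1+ε₁))P, (1/ε₁)P, ε₂I_T, (1/ε₂)I_{n_w}, and off-diagonal blocks P (1,3-block), (X₁Y)ᵀ (1,4-block), Yᵀ (1,6-block), Dᵀ (2,5-block), DΔ (4,7-block) (all other off-diagonal blocks zero) is positive definite. Then for every W₀ with W₀·W₀ᵀ ⪯ Δ·Δᵀ, the matrix Ā = (X₁ − D·W₀)·Y·P⁻¹ satisfies (1 + ε₁⁻¹)·Āᵀ·P⁻¹·Ā − P⁻¹ + γ⁻¹·I ≺ 0 and ε₁·Dᵀ·P⁻¹·D − γ·I ≺ 0. -/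
open Matrix

lemma dot_mv' {m n : Type*} [Fintype n] [Fintype m] (A : Matrix m n ℝ) (u : m → ℝ) (v : n → ℝ) :
    u ⬝ᵥ A *ᵥ v = (Aᵀ *ᵥ u) ⬝ᵥ v := by
  rw [Matrix.dotProduct_mulVec, Matrix.mulVec_transpose]

lemma sq_dot_nonneg' {k : Type*} [Fintype k] (ε c : ℝ) (hε : 0 < ε) (y h : k → ℝ) :
    0 ≤ 2 * c * (y ⬝ᵥ h) + ε⁻¹ * (y ⬝ᵥ y) + ε * c ^ 2 * (h ⬝ᵥ h) := by
  have key : 2 * c * (y ⬝ᵥ h) + ε⁻¹ * (y ⬝ᵥ y) + ε * c ^ 2 * (h ⬝ᵥ h)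
      = ε⁻¹ * ((y + (ε * c) • h) ⬝ᵥ (y + (ε * c) • h)) := by
    simp only [dotProduct_add, add_dotProduct, dotProduct_smul, smul_dotProduct, smul_eq_mul]
    rw [dotProduct_comm h y]
    field_simp
    ring
  rw [key]
  have h0 : 0 ≤ (y + (ε * c) • h) ⬝ᵥ (y + (ε * c) • h) := by
    simpa using dotProduct_self_star_nonneg (y + (ε * c) • h)
  positivity



open Matrix

/-- If the 7×7 block LMI of the control-design theorem holds (diagonal blocks
`P, γI, γI, (ε₁/(1+ε₁))P, (1/ε₁)P, ε₂I_T, (1/ε₂)I`, off-diagonal blocks `P` (1,3),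
`(X₁Y)ᵀ` (1,4), `Yᵀ` (1,6), `Dᵀ` (2,5), `DΔ` (4,7), all others zero), then for every
`W₀` with `W₀W₀ᵀ ⪯ ΔΔᵀ` the matrix `Ā = (X₁ − DW₀) Y P⁻¹` satisfies
`(1+ε₁⁻¹)ĀᵀP⁻¹Ā − P⁻¹ + γ⁻¹I ≺ 0` and `ε₁DᵀP⁻¹D − γI ≺ 0`. -/
theorem stmt_15 {nx nw T : ℕ}
    (P : Matrix (Fin nx) (Fin nx) ℝ) (hP : P.PosDef)
    (γ ε₁ ε₂ : ℝ) (hγ : 0 < γ) (hε₁ : 0 < ε₁) (hε₂ : 0 < ε₂)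
    (X1 : Matrix (Fin nx) (Fin T) ℝ) (Y : Matrix (Fin T) (Fin nx) ℝ)
    (D : Matrix (Fin nx) (Fin nw) ℝ) (Δ : Matrix (Fin nw) (Fin nw) ℝ)
    -- row 1 off-diagonal blocks (columns 2..7)
    (hLMI : (fromBlocks P
        (fromCols (0 : Matrix (Fin nx) (Fin nw) ℝ)
          (fromCols P
            (fromCols (X1 * Y)ᵀ
              (fromCols (0 : Matrix (Fin nx) (Fin nx) ℝ)
                (fromCols Yᵀ (0 : Matrix (Fin nx) (Fin nw) ℝ))))))
        (fromCols (0 : Matrix (Fin nx) (Fin nw) ℝ)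
          (fromCols P
            (fromCols (X1 * Y)ᵀ
              (fromCols (0 : Matrix (Fin nx) (Fin nx) ℝ)
                (fromCols Yᵀ (0 : Matrix (Fin nx) (Fin nw) ℝ))))))ᵀ
        -- lower-right 6×6 block (rows/cols 2..7)
        (fromBlocks (γ • (1 : Matrix (Fin nw) (Fin nw) ℝ))
          -- row 2 off-diagonal (columns 3..7): only (2,5) = Dᵀ nonzero
          (fromCols (0 : Matrix (Fin nw) (Fin nx) ℝ)
            (fromCols (0 : Matrix (Fin nw) (Fin nx) ℝ)
              (fromCols Dᵀ (0 : Matrix (Fin nw) (Fin T ⊕ Fin nw) ℝ))))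
          (fromCols (0 : Matrix (Fin nw) (Fin nx) ℝ)
            (fromCols (0 : Matrix (Fin nw) (Fin nx) ℝ)
              (fromCols Dᵀ (0 : Matrix (Fin nw) (Fin T ⊕ Fin nw) ℝ))))ᵀ
          (fromBlocks (γ • (1 : Matrix (Fin nx) (Fin nx) ℝ)) 0 0
            (fromBlocks ((ε₁ / (1 + ε₁)) • P)
              -- row 4 off-diagonal (columns 5..7): only (4,7) = DΔ nonzero
              (fromCols (0 : Matrix (Fin nx) (Fin nx) ℝ)
                (fromCols (0 : Matrix (Fin nx) (Fin T) ℝ) (D * Δ)))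
              (fromCols (0 : Matrix (Fin nx) (Fin nx) ℝ)
                (fromCols (0 : Matrix (Fin nx) (Fin T) ℝ) (D * Δ)))ᵀ
              (fromBlocks ((1 / ε₁) • P) 0 0
                (fromBlocks (ε₂ • (1 : Matrix (Fin T) (Fin T) ℝ)) 0 0
                  ((1 / ε₂) • (1 : Matrix (Fin nw) (Fin nw) ℝ)))))))).PosDef) :
    ∀ W0 : Matrix (Fin nw) (Fin T) ℝ, (Δ * Δᵀ - W0 * W0ᵀ).PosSemidef →
      (-((1 + ε₁⁻¹) • (((X1 - D * W0) * Y * P⁻¹)ᵀ * P⁻¹ * ((X1 - D * W0) * Y * P⁻¹))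
          - P⁻¹ + γ⁻¹ • (1 : Matrix (Fin nx) (Fin nx) ℝ))).PosDef
      ∧ (-(ε₁ • (Dᵀ * P⁻¹ * D) - γ • (1 : Matrix (Fin nw) (Fin nw) ℝ))).PosDef := by
  intro W0 hW0
  obtain ⟨hMh, hq⟩ := posDef_iff_dotProduct_mulVec.mp hLMI
  have hPdet : IsUnit P.det := hP.det_pos.ne'.isUnit
  have hPP : P * P⁻¹ = 1 := Matrix.mul_nonsing_inv P hPdet
  have hPT : Pᵀ = P := by
    have := hP.isHermitian.eq
    simpa [Matrix.conjTranspose_eq_transpose_of_trivial] using this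
  have hPinvH : (P⁻¹).IsHermitian := hP.isHermitian.inv
  constructor
  · -- part 1
    set c : ℝ := 1 + ε₁⁻¹ with hc
    have hcpos : 0 < c := by positivity
    set B : Matrix (Fin nx) (Fin nx) ℝ := (X1 - D * W0) * Y with hBdef
    have eXY : X1 * Y = B + D * (W0 * Y) := by
      rw [hBdef, Matrix.sub_mul, Matrix.mul_assoc, sub_add_cancel]
    refine posDef_iff_dotProduct_mulVec.mpr ⟨?_, ?_⟩
    · -- IsHermitian
      have habar : ((B * P⁻¹)ᵀ * P⁻¹ * (B * P⁻¹)).IsHermitian := by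
        rw [← Matrix.conjTranspose_eq_transpose_of_trivial]
        exact Matrix.isHermitian_conjTranspose_mul_mul _ hPinvH
      show _ = _
      simp only [conjTranspose_neg, conjTranspose_add, conjTranspose_sub, conjTranspose_smul,
        conjTranspose_one, star_trivial, habar.eq, hPinvH.eq]
    · intro x' hx'
      set x : Fin nx → ℝ := P⁻¹ *ᵥ x' with hxdef
      have hPx : P *ᵥ x = x' := by
        rw [hxdef, Matrix.mulVec_mulVec, hPP, Matrix.one_mulVec]
      set b : Fin nx → ℝ := B *ᵥ x with hbdef
      set p : Fin nx → ℝ := P⁻¹ *ᵥ b with hpdef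
      set y : Fin T → ℝ := Y *ᵥ x with hydef
      set d : Fin nw → ℝ := Dᵀ *ᵥ p with hddef
      set g : Fin nw → ℝ := Δᵀ *ᵥ d with hgdef
      set hh : Fin T → ℝ := W0ᵀ *ᵥ d with hhdef
      have hPp : P *ᵥ p = b := by
        rw [hpdef, Matrix.mulVec_mulVec, hPP, Matrix.one_mulVec]
      set v : (Fin nx ⊕ (Fin nw ⊕ (Fin nx ⊕ (Fin nx ⊕ (Fin nx ⊕ (Fin T ⊕ Fin nw)))))) → ℝ :=
        Sum.elim x (Sum.elim 0 (Sum.elim ((-γ⁻¹) • (P *ᵥ x)) (Sum.elim ((-c) • p)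
          (Sum.elim 0 (Sum.elim ((-ε₂⁻¹) • y) ((ε₂ * c) • g)))))) with hvdef
      have hvne : v ≠ 0 := by
        intro h
        have hx0 : x ≠ 0 := by
          intro h0
          apply hx'
          rw [← hPx, h0, Matrix.mulVec_zero]
        apply hx0
        ext i
        simpa [hvdef] using congrFun h (Sum.inl i)
      have hpos := hq hvne
      simp only [hvdef, star_trivial, fromBlocks_mulVec, fromCols_mulVec_sumElim,
        transpose_fromCols, fromRows_mulVec, sumElim_dotProduct_sumElim,
        dotProduct_add, add_dotProduct, smul_mulVec, one_mulVec,
        Matrix.zero_mulVec, Matrix.mulVec_zero, dotProduct_zero, zero_dotProduct,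
        transpose_zero, transpose_transpose, Matrix.mulVec_smul, dotProduct_smul,
        smul_dotProduct, smul_eq_mul, add_zero, zero_add, Sum.elim_comp_inl,
        Sum.elim_comp_inr] at hpos
      have e2 : x ⬝ᵥ P *ᵥ P *ᵥ x = P *ᵥ x ⬝ᵥ P *ᵥ x := by
        rw [dot_mv', hPT]
      have hterm : p ⬝ᵥ (D * (W0 * Y)) *ᵥ x = y ⬝ᵥ hh := by
        rw [← Matrix.mulVec_mulVec x D (W0 * Y), ← Matrix.mulVec_mulVec x W0 Y, ← hydef,
          dot_mv' D p (W0 *ᵥ y), ← hddef, dot_mv' W0 d y, ← hhdef, dotProduct_comm hh y]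
      have e6 : p ⬝ᵥ (X1 * Y) *ᵥ x = b ⬝ᵥ p + y ⬝ᵥ hh := by
        rw [eXY, Matrix.add_mulVec, dotProduct_add, hterm, ← hbdef, dotProduct_comm p b]
      have e3 : x ⬝ᵥ (X1 * Y)ᵀ *ᵥ p = b ⬝ᵥ p + y ⬝ᵥ hh := by
        rw [dot_mv', transpose_transpose, dotProduct_comm, e6]
      have e4 : x ⬝ᵥ Yᵀ *ᵥ y = y ⬝ᵥ y := by
        rw [dot_mv', transpose_transpose, ← hydef]
      have e5 : P *ᵥ x ⬝ᵥ Pᵀ *ᵥ x = P *ᵥ x ⬝ᵥ P *ᵥ x := by rw [hPT]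
      have e7 : y ⬝ᵥ Y *ᵥ x = y ⬝ᵥ y := by rw [← hydef]
      have e9 : p ⬝ᵥ P *ᵥ p = b ⬝ᵥ p := by rw [hPp, dotProduct_comm]
      have e10 : p ⬝ᵥ (D * Δ) *ᵥ g = g ⬝ᵥ g := by
        rw [← Matrix.mulVec_mulVec, dot_mv', ← hddef, dot_mv', ← hgdef]
      have e11 : g ⬝ᵥ (D * Δ)ᵀ *ᵥ p = g ⬝ᵥ g := by
        rw [Matrix.transpose_mul, ← Matrix.mulVec_mulVec, ← hddef, ← hgdef, dotProduct_comm]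
      rw [e2, e3, e4, e5, e6, e7, e9, e10, e11] at hpos
      clear_value c B x b p y d g hh
      have h1e : (1:ℝ) + ε₁ ≠ 0 := by positivity
      have hpos' : 0 < x ⬝ᵥ P *ᵥ x - γ⁻¹ * (P *ᵥ x ⬝ᵥ P *ᵥ x) - c * (b ⬝ᵥ p)
          - 2 * c * (y ⬝ᵥ hh) - ε₂⁻¹ * (y ⬝ᵥ y) - ε₂ * c ^ 2 * (g ⬝ᵥ g) := by
        refine lt_of_lt_of_eq hpos ?_
        rw [hc]
        field_simp
        ring
      -- nonnegativity facts
      have hsq : 0 ≤ 2 * c * (y ⬝ᵥ hh) + ε₂⁻¹ * (y ⬝ᵥ y) + ε₂ * c ^ 2 * (hh ⬝ᵥ hh) :=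
        sq_dot_nonneg' ε₂ c hε₂ y hh
      have hgh : hh ⬝ᵥ hh ≤ g ⬝ᵥ g := by
        have h0 := hW0.dotProduct_mulVec_nonneg d
        simp only [star_trivial, Matrix.sub_mulVec, dotProduct_sub,
          ← Matrix.mulVec_mulVec, ← hgdef, ← hhdef] at h0
        rw [dot_mv' Δ d, ← hgdef, dot_mv' W0 d, ← hhdef] at h0
        linarith
      -- the goal
      have hgoal : star x' ⬝ᵥ (-(c • ((B * P⁻¹)ᵀ * P⁻¹ * (B * P⁻¹)) - P⁻¹ + γ⁻¹ • 1)) *ᵥ x'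
          = x ⬝ᵥ P *ᵥ x - γ⁻¹ * (P *ᵥ x ⬝ᵥ P *ᵥ x) - c * (b ⬝ᵥ p) := by
        simp only [star_trivial, Matrix.neg_mulVec, Matrix.add_mulVec, Matrix.sub_mulVec,
          smul_mulVec, one_mulVec, dotProduct_neg, dotProduct_add, dotProduct_sub,
          dotProduct_smul, smul_eq_mul]
        have g1 : x' ⬝ᵥ ((B * P⁻¹)ᵀ * P⁻¹ * (B * P⁻¹)) *ᵥ x' = b ⬝ᵥ p := by
          rw [← Matrix.mulVec_mulVec, ← Matrix.mulVec_mulVec, ← Matrix.mulVec_mulVec,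
            ← hxdef, ← hbdef, ← hpdef, dot_mv', transpose_transpose,
            ← Matrix.mulVec_mulVec, ← hxdef, ← hbdef]
        have g2 : x' ⬝ᵥ P⁻¹ *ᵥ x' = x ⬝ᵥ P *ᵥ x := by
          rw [← hxdef, hPx, dotProduct_comm]
        have g3 : x' ⬝ᵥ x' = P *ᵥ x ⬝ᵥ P *ᵥ x := by rw [hPx]
        rw [g1, g2, g3]
        ring
      rw [hgoal]
      have hmul : ε₂ * c ^ 2 * (hh ⬝ᵥ hh) ≤ ε₂ * c ^ 2 * (g ⬝ᵥ g) :=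
        mul_le_mul_of_nonneg_left hgh (by positivity)
      have hS : 0 ≤ 2 * c * (y ⬝ᵥ hh) + ε₂⁻¹ * (y ⬝ᵥ y) + ε₂ * c ^ 2 * (g ⬝ᵥ g) := by
        linarith [hsq, hmul]
      linarith [hpos', hS]
  · -- part 2
    refine posDef_iff_dotProduct_mulVec.mpr ⟨?_, ?_⟩
    · show _ = _
      have hdpd : (Dᵀ * P⁻¹ * D).IsHermitian := by
        have := Matrix.isHermitian_conjTranspose_mul_mul D hPinvH
        rwa [Matrix.conjTranspose_eq_transpose_of_trivial] at this
      simp only [conjTranspose_neg, conjTranspose_sub, conjTranspose_smul,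
        conjTranspose_one, star_trivial, hdpd.eq]
    · intro u hu
      set e : Fin nx → ℝ := D *ᵥ u with hedef
      set w : Fin nx → ℝ := P⁻¹ *ᵥ e with hwdef
      set q : Fin nx → ℝ := (-ε₁) • w with hqdef
      have hPw : P *ᵥ w = e := by
        rw [hwdef, Matrix.mulVec_mulVec, hPP, Matrix.one_mulVec]
      set v : (Fin nx ⊕ (Fin nw ⊕ (Fin nx ⊕ (Fin nx ⊕ (Fin nx ⊕ (Fin T ⊕ Fin nw)))))) → ℝ :=
        Sum.elim 0 (Sum.elim u (Sum.elim 0 (Sum.elim 0 (Sum.elim q 0)))) with hvdef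
      have hvne : v ≠ 0 := by
        intro h
        apply hu
        ext i
        simpa [hvdef] using congrFun h (Sum.inr (Sum.inl i))
      have hpos := hq hvne
      simp only [hvdef, star_trivial, fromBlocks_mulVec, fromCols_mulVec_sumElim,
        transpose_fromCols, fromRows_mulVec, sumElim_dotProduct_sumElim,
        dotProduct_add, add_dotProduct, smul_mulVec, one_mulVec,
        Matrix.zero_mulVec, Matrix.mulVec_zero, dotProduct_zero, zero_dotProduct,
        transpose_zero, transpose_transpose, Matrix.mulVec_smul, dotProduct_smul,
        smul_dotProduct, smul_eq_mul, add_zero, zero_add, Sum.elim_comp_inl,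
        Sum.elim_comp_inr, Sum.elim_zero_zero, Pi.zero_comp] at hpos
      have f1 : u ⬝ᵥ Dᵀ *ᵥ q = e ⬝ᵥ q := by
        rw [dot_mv' Dᵀ u q, transpose_transpose, ← hedef]
      have f2 : q ⬝ᵥ D *ᵥ u = e ⬝ᵥ q := by
        rw [← hedef, dotProduct_comm]
      have f3 : q ⬝ᵥ P *ᵥ q = ε₁ ^ 2 * (e ⬝ᵥ w) := by
        rw [hqdef, Matrix.mulVec_smul, dotProduct_smul, smul_dotProduct, hPw,
          smul_eq_mul, smul_eq_mul, dotProduct_comm w e]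
        ring
      have f4 : e ⬝ᵥ q = -ε₁ * (e ⬝ᵥ w) := by
        rw [hqdef, dotProduct_smul, smul_eq_mul]
      rw [f1, f2, f3, f4] at hpos
      clear_value e w q
      have hpos' : 0 < γ * (u ⬝ᵥ u) - ε₁ * (e ⬝ᵥ w) := by
        refine lt_of_lt_of_eq hpos ?_
        field_simp
        ring
      have hgoal : star u ⬝ᵥ (-(ε₁ • (Dᵀ * P⁻¹ * D) - γ • (1 : Matrix (Fin nw) (Fin nw) ℝ))) *ᵥ u
          = γ * (u ⬝ᵥ u) - ε₁ * (e ⬝ᵥ w) := by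
        simp only [star_trivial, Matrix.neg_mulVec, Matrix.sub_mulVec, smul_mulVec,
          one_mulVec, dotProduct_neg, dotProduct_sub, dotProduct_smul, smul_eq_mul]
        have g1 : u ⬝ᵥ (Dᵀ * P⁻¹ * D) *ᵥ u = e ⬝ᵥ w := by
          rw [← Matrix.mulVec_mulVec, ← Matrix.mulVec_mulVec, ← hedef, ← hwdef,
            dot_mv' Dᵀ u w, transpose_transpose, ← hedef]
        rw [g1]
        ring
      rw [hgoal]
      exact hpos'
end
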